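/- Let G be a profinite group and x ∈ G an element such that x^d is a (left) Engel element of G for some positive integer d. Let x* be the homogeneous element of the Lie algebra L(G) over F_p associated with the p-dimension central series of G corresponding to x. Then x* is ad-nilpotent in L(G). -/

import Mathlib

open scoped commutatorElement

/-- Iterated (left) Engel commutator. -/
def engel {G : Type*} [Group G] (g x : G) : ℕ → G
  | 0 => g
  | n + 1 => ⁅engel g x n, x⁆

section Core

/-- Bundled N_p-series data. -/
structure NpS (G : Type*) [Group G] (p : ℕ) where
  D : ℕ → Subgroup G
  h1 : D 1 = ⊤
  mono : ∀ k, D (k+1) ≤ D k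
  comm : ∀ a b : ℕ, ∀ u ∈ D a, ∀ v ∈ D b, ⁅u,v⁆ ∈ D (a+b)
  pow : ∀ a : ℕ, ∀ u ∈ D a, u ^ p ∈ D (p*a)

namespace NpS

variable {G : Type*} [Group G] {p : ℕ} (S : NpS G p)

theorem mono' {a b : ℕ} (h : a ≤ b) : S.D b ≤ S.D a := by
  induction b, h using Nat.le_induction with
  | base => exact le_rfl
  | succ n hn ih => exact le_trans (S.mono n) ih

theorem mem_top (g : G) : g ∈ S.D 1 := by rw [S.h1]; trivial

theorem comm_le {a b K : ℕ} (hK : K ≤ a + b) {u v : G} (hu : u ∈ S.D a) (hv : v ∈ S.D b) :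
    ⁅u,v⁆ ∈ S.D K := S.mono' hK (S.comm a b u hu v hv)

theorem conj_mem {K : ℕ} {w : G} (hw : w ∈ S.D K) (g : G) : g * w * g⁻¹ ∈ S.D K := by
  have h1 : ⁅g, w⁆ ∈ S.D K := S.comm_le (Nat.le_add_left K 1) (S.mem_top g) hw
  have : g * w * g⁻¹ = ⁅g, w⁆ * w := by group
  rw [this]; exact mul_mem h1 hw

/-- congruence modulo `D K`. -/
def MEq (K : ℕ) (u v : G) : Prop := u⁻¹ * v ∈ S.D K

namespace MEq

variable {S}

theorem refl {K : ℕ} (u : G) : S.MEq K u u := by simp [NpS.MEq, one_mem]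

theorem symm {K : ℕ} {u v : G} (h : S.MEq K u v) : S.MEq K v u := by
  have := inv_mem h
  simpa [NpS.MEq, mul_inv_rev] using this

theorem trans {K : ℕ} {u v w : G} (h : S.MEq K u v) (h' : S.MEq K v w) : S.MEq K u w := by
  have := mul_mem h h'
  simpa [NpS.MEq, mul_assoc] using this

theorem one_iff {K : ℕ} {v : G} : S.MEq K 1 v ↔ v ∈ S.D K := by simp [NpS.MEq]

theorem mem_of {K : ℕ} {u v : G} (h : S.MEq K u v) (hu : u ∈ S.D K) : v ∈ S.D K := by
  have := mul_mem hu h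
  simpa using this

theorem mono {K K' : ℕ} (hK : K ≤ K') {u v : G} (h : S.MEq K' u v) : S.MEq K u v :=
  S.mono' hK h

theorem mul_congr {K : ℕ} {u u' v v' : G} (h : S.MEq K u u') (h' : S.MEq K v v') :
    S.MEq K (u*v) (u'*v') := by
  have h2 : (v⁻¹ * (u⁻¹ * u') * v) * (v⁻¹ * v') ∈ S.D K := by
    refine mul_mem ?_ h'
    have := S.conj_mem h v⁻¹
    simpa using this
  have : (u*v)⁻¹ * (u'*v') = (v⁻¹ * (u⁻¹ * u') * v) * (v⁻¹ * v') := by group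
  rw [NpS.MEq, this]; exact h2

theorem inv_congr {K : ℕ} {u v : G} (h : S.MEq K u v) : S.MEq K u⁻¹ v⁻¹ := by
  have h2 := inv_mem (S.conj_mem h v)
  have : (u⁻¹)⁻¹ * v⁻¹ = (v * (u⁻¹ * v) * v⁻¹)⁻¹ := by group
  rw [NpS.MEq, this]; exact h2

theorem pow_congr {K : ℕ} {u v : G} (h : S.MEq K u v) (t : ℕ) : S.MEq K (u^t) (v^t) := by
  induction t with
  | zero => simpa using refl 1
  | succ n ih =>
      have := mul_congr ih h
      simpa [pow_succ] using this

theorem zpow_congr {K : ℕ} {u v : G} (h : S.MEq K u v) (t : ℤ) : S.MEq K (u^t) (v^t) := by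
  cases t with
  | ofNat n => simpa using pow_congr h n
  | negSucc n =>
      have := inv_congr (pow_congr h (n+1))
      simpa [zpow_negSucc] using this

theorem conj_congr {K : ℕ} {u v : G} (h : S.MEq K u v) (g : G) :
    S.MEq K (g*u*g⁻¹) (g*v*g⁻¹) := by
  have h2 := S.conj_mem h g
  have : (g*u*g⁻¹)⁻¹ * (g*v*g⁻¹) = g * (u⁻¹*v) * g⁻¹ := by group
  rw [NpS.MEq, this]; exact h2

theorem deep_mul_right {K : ℕ} {e : G} (he : e ∈ S.D K) (u : G) : S.MEq K u (u*e) := by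
  have : u⁻¹ * (u*e) = e := by group
  rw [NpS.MEq, this]; exact he

theorem deep_mul_left {K : ℕ} {e : G} (he : e ∈ S.D K) (u : G) : S.MEq K u (e*u) := by
  have h2 := S.conj_mem he u⁻¹
  have : u⁻¹ * (e*u) = u⁻¹ * e * (u⁻¹)⁻¹ := by group
  rw [NpS.MEq, this]; exact h2

theorem swap {K a b : ℕ} (hK : K ≤ a + b) {u v : G} (hu : u ∈ S.D a) (hv : v ∈ S.D b) :
    S.MEq K (u*v) (v*u) := by
  have h2 : ⁅v⁻¹, u⁻¹⁆ ∈ S.D K := S.comm_le (by omega) (inv_mem hv) (inv_mem hu)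
  have : (u*v)⁻¹ * (v*u) = ⁅v⁻¹, u⁻¹⁆ := by group
  rw [NpS.MEq, this]; exact h2

end MEq

end NpS

end Core

section Engel

variable {G : Type*} [Group G] {p : ℕ} (S : NpS G p)

theorem engel_add (g x : G) (m n : ℕ) : engel g x (m + n) = engel (engel g x m) x n := by
  induction n with
  | zero => rfl
  | succ k ih => rw [← Nat.add_assoc, engel, engel, ih]

theorem engel_map {H : Type*} [Group H] (f : G →* H) (g x : G) (n : ℕ) :
    f (engel g x n) = engel (f g) (f x) n := by
  induction n with
  | zero => rfl
  | succ k ih => rw [engel, engel, map_commutatorElement, ih]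

namespace NpS

theorem engel_mem {A B : ℕ} {y x' : G} (hy : y ∈ S.D A) (hx : x' ∈ S.D B) (n : ℕ) :
    engel y x' n ∈ S.D (A + n * B) := by
  induction n with
  | zero => simpa [engel] using hy
  | succ k ih =>
      have := S.comm (A + k * B) B _ ih _ hx
      rw [engel]
      refine S.mono' (le_of_eq (by ring)) this

theorem pow_p_pow_mem {B : ℕ} {x' : G} (hx : x' ∈ S.D B) (s : ℕ) :
    x' ^ (p ^ s) ∈ S.D (p ^ s * B) := by
  induction s with
  | zero => simpa using hx
  | succ k ih =>
      have := S.pow _ _ ih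
      have h2 : (x' ^ p ^ k) ^ p = x' ^ p ^ (k+1) := by
        rw [← pow_mul, pow_succ]
      rw [← h2]
      refine S.mono' (le_of_eq (by ring)) this

/-- commutator congruence in the first slot with fixed deep second slot. -/
theorem MEq.comm_fixed {S : NpS G p} {A M : ℕ} {u v c : G} (h : S.MEq A u v) (hc : c ∈ S.D M) :
    S.MEq (A + M) ⁅u, c⁆ ⁅v, c⁆ := by
  have hv : v = u * (u⁻¹ * v) := by group
  have hdeep : ⁅(u⁻¹ * v), c⁆ ∈ S.D (A + M) := S.comm A M _ h _ hc
  have hconj := S.conj_mem hdeep u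
  have hexp : ⁅v, c⁆ = (u * ⁅(u⁻¹*v), c⁆ * u⁻¹) * ⁅u, c⁆ := by
    conv_lhs => rw [hv]
    group
  rw [hexp]
  exact MEq.deep_mul_left hconj _

/-- Linearization in the first slot of iterated Engel commutators. -/
theorem lin {m : ℕ} {a : G} (ha : a ∈ S.D m) (n : ℕ) {j : ℕ} (g : G) {u : G}
    (hu : u ∈ S.D j) :
    S.MEq (j + n * m + 1) (engel g a n * engel u a n) (engel (g * u) a n) := by
  induction n with
  | zero => exact MEq.refl _
  | succ k ih =>
      set A := engel g a k with hA
      set B := engel u a k with hB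
      have hAmem : A ∈ S.D (1 + k * m) := S.engel_mem (S.mem_top g) ha k
      have hBmem : B ∈ S.D (j + k * m) := S.engel_mem hu ha k
      have step1 : S.MEq (j + (k+1) * m + 1) ⁅A * B, a⁆ (engel (g*u) a (k+1)) := by
        have h2 := MEq.comm_fixed (S := S) ih ha
        rw [engel]
        refine MEq.mono (le_of_eq (by ring)) h2
      refine MEq.trans ?_ step1
      -- goal : MEq K (⁅A,a⁆ * ⁅B,a⁆) (⁅A*B, a⁆)
      have hexp : ⁅A * B, a⁆ = (A * ⁅B, a⁆ * A⁻¹) * ⁅A, a⁆ := by group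
      rw [hexp]
      set X := ⁅A, a⁆ with hX
      set Y := ⁅B, a⁆ with hY
      have hXmem : X ∈ S.D (1 + (k+1) * m) := by
        have := S.comm _ m _ hAmem _ ha
        refine S.mono' (le_of_eq (by ring)) this
      have hYmem : Y ∈ S.D (j + (k+1) * m) := by
        have := S.comm _ m _ hBmem _ ha
        refine S.mono' (le_of_eq (by ring)) this
      have hAYdeep : ⁅A, Y⁆ ∈ S.D (j + (k+1) * m + 1) :=
        S.comm_le (by ring_nf; omega) hAmem hYmem
      have h3 : S.MEq (j + (k+1) * m + 1) Y (A * Y * A⁻¹) := by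
        have hAY : A * Y * A⁻¹ = ⁅A, Y⁆ * Y := by group
        rw [hAY]
        exact MEq.deep_mul_left hAYdeep _
      have h4 : S.MEq (j + (k+1) * m + 1) (X * Y) (Y * X) :=
        MEq.swap (by omega) hXmem hYmem
      exact MEq.trans h4 (MEq.mul_congr h3 (MEq.refl X))

end NpS

end Engel

section Bilin

variable {G : Type*} [Group G] {p : ℕ} (S : NpS G p)

namespace NpS

/-- bilinearity in the first slot: ⁅w^t, b⁆ ≡ ⁅w,b⁆^t -/
theorem pow_left {q M : ℕ} (hq : 1 ≤ q) {w b : G} (hw : w ∈ S.D q) (hb : b ∈ S.D M) (t : ℕ) :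
    S.MEq (q + M + 1) ⁅w ^ t, b⁆ (⁅w, b⁆ ^ t) := by
  induction t with
  | zero => simpa using MEq.refl (1 : G)
  | succ k ih =>
      have hexp : ⁅w ^ (k+1), b⁆ = (w * ⁅w ^ k, b⁆ * w⁻¹) * ⁅w, b⁆ := by
        rw [pow_succ']; group
      rw [hexp]
      set Y := ⁅w, b⁆ ^ k with hY
      have h1 : S.MEq (q + M + 1) (w * ⁅w ^ k, b⁆ * w⁻¹) (w * Y * w⁻¹) :=
        MEq.conj_congr ih w
      have hYmem : Y ∈ S.D (q + M) := pow_mem (S.comm q M _ hw _ hb) k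
      have hdeep : ⁅w, Y⁆ ∈ S.D (q + M + 1) := S.comm_le (by omega) hw hYmem
      have h2 : S.MEq (q + M + 1) (w * Y * w⁻¹) (Y) := by
        have : w * Y * w⁻¹ = ⁅w, Y⁆ * Y := by group
        rw [this]
        exact MEq.symm (MEq.deep_mul_left hdeep _)
      have h3 := MEq.trans h1 h2
      have := MEq.mul_congr h3 (MEq.refl ⁅w, b⁆)
      rw [← pow_succ] at this
      exact this

/-- bilinearity in the second slot: ⁅w, b^t⁆ ≡ ⁅w,b⁆^t -/
theorem pow_right {q M : ℕ} (hM : 1 ≤ M) {w b : G} (hw : w ∈ S.D q) (hb : b ∈ S.D M) (t : ℕ) :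
    S.MEq (q + M + 1) ⁅w, b ^ t⁆ (⁅w, b⁆ ^ t) := by
  induction t with
  | zero => simpa using MEq.refl (1 : G)
  | succ k ih =>
      have hexp : ⁅w, b ^ (k+1)⁆ = ⁅w, b⁆ * (b * ⁅w, b ^ k⁆ * b⁻¹) := by
        rw [pow_succ']; group
      rw [hexp]
      set Y := ⁅w, b⁆ ^ k with hY
      have h1 : S.MEq (q + M + 1) (b * ⁅w, b ^ k⁆ * b⁻¹) (b * Y * b⁻¹) :=
        MEq.conj_congr ih b
      have hYmem : Y ∈ S.D (q + M) := pow_mem (S.comm q M _ hw _ hb) k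
      have hdeep : ⁅b, Y⁆ ∈ S.D (q + M + 1) := S.comm_le (by omega) hb hYmem
      have h2 : S.MEq (q + M + 1) (b * Y * b⁻¹) (Y) := by
        have : b * Y * b⁻¹ = ⁅b, Y⁆ * Y := by group
        rw [this]
        exact MEq.symm (MEq.deep_mul_left hdeep _)
      have h3 := MEq.trans h1 h2
      have := MEq.mul_congr (MEq.refl ⁅w, b⁆) h3
      rw [← pow_succ'] at this
      exact this

/-- iterated: engel y (b^t) N ≡ (engel y b N)^(t^N) -/
theorem engel_pow_right {j M : ℕ} (hj : 1 ≤ j) (hM : 1 ≤ M) {y b : G}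
    (hy : y ∈ S.D j) (hb : b ∈ S.D M) (t : ℕ) (N : ℕ) :
    S.MEq (j + N * M + 1) (engel y (b ^ t) N) ((engel y b N) ^ (t ^ N)) := by
  induction N with
  | zero => simpa [engel] using MEq.refl y
  | succ k ih =>
      set W := engel y b k with hW
      set V := W ^ (t ^ k) with hV
      have hWmem : W ∈ S.D (j + k * M) := S.engel_mem hy hb k
      have hVmem : V ∈ S.D (j + k * M) := pow_mem hWmem _
      have step1 : S.MEq (j + (k+1) * M + 1) (engel y (b^t) (k+1)) ⁅V, b ^ t⁆ := by
        rw [engel]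
        have hbt : b ^ t ∈ S.D M := pow_mem hb t
        have := MEq.comm_fixed (S := S) ih hbt
        exact MEq.mono (le_of_eq (by ring)) this
      refine MEq.trans step1 ?_
      have step2 : S.MEq ((j + k*M) + M + 1) ⁅V, b ^ t⁆ (⁅V, b⁆ ^ t) :=
        S.pow_right hM hVmem hb t
      have step3 : S.MEq ((j + k*M) + M + 1) ⁅V, b⁆ (⁅W, b⁆ ^ (t ^ k)) :=
        S.pow_left (by omega) hWmem hb (t ^ k)
      have step4 := MEq.pow_congr step3 t
      have heq : (⁅W, b⁆ ^ t ^ k) ^ t = (engel y b (k+1)) ^ (t ^ (k+1)) := by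
        rw [engel, ← pow_mul, pow_succ]
      rw [heq] at step4
      have := MEq.trans step2 step4
      exact MEq.mono (le_of_eq (by ring)) this

/-- coprime-power extraction -/
theorem coprime_pow_mem {q : ℕ} (hq : 1 ≤ q) (hp : p.Prime) {w : G} (hw : w ∈ S.D q) {c : ℕ}
    (hc : ¬ (p ∣ c)) (hwc : w ^ c ∈ S.D (q + 1)) : w ∈ S.D (q + 1) := by
  have hwp : w ^ p ∈ S.D (q + 1) := by
    have := S.pow q w hw
    refine S.mono' ?_ this
    have hp2 : 2 ≤ p := hp.two_le
    nlinarith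
  have hcop : Nat.Coprime p c := (Nat.Prime.coprime_iff_not_dvd hp).mpr hc
  obtain ⟨u, v, huv⟩ : ∃ u v : ℤ, (p : ℤ) * u + (c : ℤ) * v = 1 := by
    refine ⟨Nat.gcdA p c, Nat.gcdB p c, ?_⟩
    have := Nat.gcd_eq_gcd_ab p c
    rw [Nat.Coprime] at hcop
    rw [hcop] at this
    push_cast at this ⊢
    linarith [this]
  have h1 : w = ((w ^ p) ^ u) * ((w ^ c) ^ v) := by
    have : ((w ^ p) ^ u) * ((w ^ c) ^ v) = w ^ ((p : ℤ) * u + (c : ℤ) * v) := by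
      rw [zpow_add, zpow_mul, zpow_mul, zpow_natCast, zpow_natCast]
    rw [this, huv, zpow_one]
  rw [h1]
  exact mul_mem (zpow_mem hwp u) (zpow_mem hwc v)

end NpS

end Bilin

section AbstractLazard

open Finset

private def ee (n k : ℕ) : ℤ := (-1) ^ k * (n.choose k)

private def ee' (n k : ℕ) : ℤ := if k = 0 then 0 else ee n (k-1)

private lemma ee_succ (n k : ℕ) : ee (n+1) k = ee n k - ee' n k := by
  match k with
  | 0 => simp [ee, ee']
  | (k+1) =>
      show ee (n+1) (k+1) = ee n (k+1) - ee' n (k+1)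
      have h : ee' n (k+1) = ee n k := by simp [ee']
      rw [h]
      simp only [ee, Nat.choose_succ_succ]
      push_cast
      ring

theorem iter_formula {M : Type*} [CommGroup M] (σ : M →* M) (ζ : M) (n : ℕ) :
    (fun u => u * (σ u)⁻¹)^[n] ζ =
      ∏ k ∈ range (n+1), ((⇑σ)^[k] ζ) ^ (ee n k) := by
  induction n with
  | zero => simp [ee]
  | succ n ih =>
      rw [Function.iterate_succ_apply', ih]
      set A : ℕ → M := fun k => (⇑σ)^[k] ζ with hA
      have hσ : σ (∏ k ∈ range (n+1), (A k) ^ (ee n k))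
          = ∏ k ∈ range (n+1), (A (k+1)) ^ (ee n k) := by
        rw [map_prod]
        refine Finset.prod_congr rfl ?_
        intro k _
        rw [map_zpow]
        show σ ((⇑σ)^[k] ζ) ^ ee n k = ((⇑σ)^[k+1] ζ) ^ ee n k
        rw [Function.iterate_succ_apply']
      show (∏ k ∈ range (n+1), (A k) ^ (ee n k)) *
          (σ (∏ k ∈ range (n+1), (A k) ^ (ee n k)))⁻¹ = _
      rw [hσ]
      have h1 : (∏ k ∈ range (n+2), (A k) ^ (ee n k))
          = ∏ k ∈ range (n+1), (A k) ^ (ee n k) := by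
        rw [Finset.prod_range_succ]
        have : ee n (n+1) = 0 := by simp [ee, Nat.choose_succ_self]
        rw [this, zpow_zero, mul_one]
      have h2 : (∏ k ∈ range (n+2), (A k) ^ (ee' n k))
          = ∏ k ∈ range (n+1), (A (k+1)) ^ (ee n k) := by
        rw [Finset.prod_range_succ']
        have hz : ee' n 0 = 0 := by simp [ee']
        rw [hz, zpow_zero, mul_one]
        refine Finset.prod_congr rfl ?_
        intro k _
        have : ee' n (k+1) = ee n k := by simp [ee']
        rw [this]
      rw [← h1, ← h2, ← Finset.prod_inv_distrib, ← Finset.prod_mul_distrib]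
      refine Finset.prod_congr rfl ?_
      intro k _
      rw [← zpow_neg, ← zpow_add, ee_succ n k]
      ring_nf
      rfl

theorem choose_mod (p : ℕ) (hp : p.Prime) : ∀ k, k ≤ p - 1 →
    (((p-1).choose k : ZMod p)) = (-1) ^ k := by
  intro k
  induction k with
  | zero => intro _; simp
  | succ k ih =>
      intro hk
      have hk' : k ≤ p - 1 := by omega
      have h0 := ih hk'
      have hdvd : (p : ℕ) ∣ p.choose (k+1) :=
        Nat.Prime.dvd_choose_self hp (Nat.succ_ne_zero k) (by have := hp.two_le; omega)
      have hp1 : p - 1 + 1 = p := by have := hp.two_le; omega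
      have hsplit : p.choose (k+1) = (p-1).choose k + (p-1).choose (k+1) := by
        conv_lhs => rw [← hp1]
        exact Nat.choose_succ_succ _ _
      have hz : ((p.choose (k+1) : ZMod p)) = 0 := by
        rw [ZMod.natCast_eq_zero_iff]
        exact hdvd
      rw [hsplit] at hz
      push_cast at hz
      have h2 : (((p-1).choose (k+1) : ZMod p)) = -((-1)^k) := by
        rw [← h0]
        linear_combination hz
      rw [h2]
      ring

theorem abstract_lazard {M : Type*} [CommGroup M] {p : ℕ} (hp : p.Prime)
    (σ : M →* M) (tor : ∀ u : M, u ^ p = 1) (ζ : M) :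
    (fun u => u * (σ u)⁻¹)^[p-1] ζ = ∏ k ∈ range p, (⇑σ)^[k] ζ := by
  rw [iter_formula]
  have hp1 : p - 1 + 1 = p := by have := hp.two_le; omega
  rw [hp1]
  refine Finset.prod_congr rfl ?_
  intro k hk
  rw [Finset.mem_range] at hk
  set A := (⇑σ)^[k] ζ
  have hdvd : (p : ℤ) ∣ (ee (p-1) k - 1) := by
    rw [← ZMod.intCast_zmod_eq_zero_iff_dvd]
    have h1 : ((ee (p-1) k : ℤ) : ZMod p) = 1 := by
      rw [ee]
      push_cast
      rw [choose_mod p hp k (by omega)]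
      rw [← pow_add, ← two_mul, pow_mul]
      norm_num
    push_cast
    rw [h1]
    ring
  obtain ⟨c, hc⟩ := hdvd
  have h3 : A ^ (ee (p-1) k) = A ^ (1 + (p : ℤ) * c) := by rw [← hc]; ring_nf
  rw [h3, zpow_add, zpow_one, zpow_mul, zpow_natCast, tor A]
  simp

end AbstractLazard

section GroupLazard

open Finset

namespace NpS

variable {G : Type*} [Group G] {p : ℕ} (S : NpS G p)

open IsMulCommutative in
theorem lazard (hp : p.Prime) {i' j' : ℕ} (hi' : 1 ≤ i') {x' y' : G}
    (hx : x' ∈ S.D i') (hy : y' ∈ S.D j') (hbig : (p-2) * i' + 1 ≤ j') :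
    S.MEq (j' + p * i' + 1) (engel y' x' p) ⁅y', x' ^ p⁆ := by
  have hp2 : 2 ≤ p := hp.two_le
  have hj' : 1 ≤ j' := le_trans (Nat.le_add_left 1 _) hbig
  set K := j' + p * i' + 1 with hK
  set J := j' + i' with hJ
  have hpi : p * i' = (p-2) * i' + 2 * i' := by
    have h : (p - 2) + 2 = p := by omega
    calc p * i' = ((p-2) + 2) * i' := by rw [h]
    _ = (p-2) * i' + 2 * i' := by ring
  have hJJK : K ≤ J + J := by omega
  have hpJK : K ≤ p * J := by
    have h1 : p * J = p * j' + p * i' := by ring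
    have h2 : 2 * j' ≤ p * j' := Nat.mul_le_mul_right j' hp2
    omega
  haveI hN : (S.D K).Normal := ⟨fun w hw g => S.conj_mem hw g⟩
  set φ := QuotientGroup.mk' (S.D K) with hφ
  set H : Subgroup (G ⧸ S.D K) := (S.D J).map φ with hH
  have hmemH : ∀ w : G, w ∈ S.D J → φ w ∈ H := fun w hw => ⟨w, hw, rfl⟩
  have hφ_eq : ∀ u v : G, u⁻¹ * v ∈ S.D K → φ u = φ v := by
    intro u v huv
    exact (QuotientGroup.eq).mpr huv
  haveI hHcomm : IsMulCommutative H := by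
    constructor
    constructor
    rintro ⟨a, wa, hwa, rfl⟩ ⟨b, wb, hwb, rfl⟩
    have hc : (wa * wb)⁻¹ * (wb * wa) ∈ S.D K := by
      have hgid : (wa * wb)⁻¹ * (wb * wa) = ⁅wb⁻¹, wa⁻¹⁆ := by group
      rw [hgid]; exact S.comm_le hJJK (inv_mem hwb) (inv_mem hwa)
    have hmm : φ (wa * wb) = φ (wb * wa) := hφ_eq _ _ hc
    refine Subtype.ext ?_
    show (φ wa) * (φ wb) = (φ wb) * (φ wa)
    rw [← map_mul, ← map_mul, hmm]
  have tor : ∀ u : ↥H, u ^ p = 1 := by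
    rintro ⟨a, w, hw, rfl⟩
    ext
    show (φ w) ^ p = 1
    rw [← map_pow]
    have : w ^ p ∈ S.D K := S.mono' hpJK (S.pow J w hw)
    exact (QuotientGroup.eq_one_iff _).mpr this
  have hconjmem : ∀ u : G ⧸ S.D K, u ∈ H → (φ x') * u * (φ x')⁻¹ ∈ H := by
    rintro _ ⟨w, hw, rfl⟩
    refine ⟨x' * w * x'⁻¹, S.conj_mem hw x', ?_⟩
    simp [map_mul]
  set στ : ↥H →* ↥H :=
    { toFun := fun u => ⟨(φ x') * u * (φ x')⁻¹, hconjmem u u.2⟩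
      map_one' := by ext; simp
      map_mul' := by intro a b; ext; show _ = _; push_cast; group } with hστ
  have hζmem : ⁅y', x'⁆ ∈ S.D J := S.comm j' i' _ hy _ hx
  set ζ' : ↥H := ⟨φ ⁅y', x'⁆, hmemH _ hζmem⟩ with hζ'
  -- G-side iteration
  have eng_iter : ∀ n, engel y' x' (n+1) = (fun g => ⁅g, x'⁆)^[n] ⁅y', x'⁆ := by
    intro n
    induction n with
    | zero => rfl
    | succ k ih => rw [Function.iterate_succ_apply', ← ih]; rfl
  -- lift of the T-iteration
  have LF : ∀ n, φ ((fun g => ⁅g, x'⁆)^[n] ⁅y', x'⁆)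
      = (((fun u => u * (στ u)⁻¹)^[n] ζ' : ↥H) : G ⧸ S.D K) := by
    intro n
    induction n with
    | zero => rfl
    | succ k ih =>
        rw [Function.iterate_succ_apply', Function.iterate_succ_apply']
        set u := (fun u => u * (στ u)⁻¹)^[k] ζ' with hu
        rw [map_commutatorElement, ih]
        show ⁅(u : G ⧸ S.D K), φ x'⁆ = ((u * (στ u)⁻¹ : ↥H) : G ⧸ S.D K)
        push_cast
        show _ = (u : G ⧸ S.D K) * ((φ x') * u * (φ x')⁻¹)⁻¹
        group
  -- right side
  have RS : ∀ n, φ ⁅y', x' ^ n⁆ = ((∏ k ∈ range n, (⇑στ)^[k] ζ' : ↥H) : G ⧸ S.D K) := by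
    intro n
    induction n with
    | zero => simp
    | succ k ih =>
        have hgid : ⁅y', x' ^ (k+1)⁆ = ⁅y', x'⁆ * (x' * ⁅y', x' ^ k⁆ * x'⁻¹) := by
          rw [pow_succ']; group
        rw [hgid, map_mul]
        have hconj : φ (x' * ⁅y', x' ^ k⁆ * x'⁻¹)
            = (φ x') * (φ ⁅y', x' ^ k⁆) * (φ x')⁻¹ := by simp [map_mul]
        rw [hconj, ih]
        have hstep : (φ x') * ((∏ k ∈ range k, (⇑στ)^[k] ζ' : ↥H) : G ⧸ S.D K) * (φ x')⁻¹
            = ((στ (∏ j ∈ range k, (⇑στ)^[j] ζ') : ↥H) : G ⧸ S.D K) := rfl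
        rw [hstep, map_prod]
        have hsh : ∀ j, στ ((⇑στ)^[j] ζ') = (⇑στ)^[j+1] ζ' := by
          intro j; rw [Function.iterate_succ_apply']
        calc (ζ' : G ⧸ S.D K) * ((∏ j ∈ range k, στ ((⇑στ)^[j] ζ') : ↥H) : G ⧸ S.D K)
            = ((ζ' * ∏ j ∈ range k, στ ((⇑στ)^[j] ζ') : ↥H) : G ⧸ S.D K) := by push_cast; rfl
        _ = ((∏ j ∈ range (k+1), (⇑στ)^[j] ζ' : ↥H) : G ⧸ S.D K) := by
            congr 1
            rw [Finset.prod_range_succ']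
            simp only [hsh]
            rw [mul_comm]
            rfl
  -- conclude
  have hfinal : φ (engel y' x' p) = φ ⁅y', x' ^ p⁆ := by
    have hp1 : (p - 1) + 1 = p := by omega
    have h1 := eng_iter (p-1)
    rw [hp1] at h1
    rw [h1, LF, abstract_lazard hp στ tor ζ', RS]
  exact (QuotientGroup.eq).mp hfinal

end NpS

end GroupLazard

section Bridge

namespace NpS

variable {G : Type*} [Group G] {p : ℕ} (S : NpS G p)

theorem MEq.engel_fixed {S : NpS G p} {A M : ℕ} {u v c : G} (h : S.MEq A u v)
    (hc : c ∈ S.D M) (n : ℕ) :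
    S.MEq (A + n * M) (engel u c n) (engel v c n) := by
  induction n with
  | zero => simpa [engel] using h
  | succ k ih =>
      have h2 := MEq.comm_fixed (S := S) ih hc
      rw [engel, engel]
      exact MEq.mono (le_of_eq (by ring)) h2

theorem bridge1 (hp : p.Prime) {i' : ℕ} (hi' : 1 ≤ i') {x' : G} (hx : x' ∈ S.D i')
    (k : ℕ) {j' : ℕ} {y : G} (hy : y ∈ S.D j') (hbig : (p-2) * i' + 1 ≤ j') :
    S.MEq (j' + p * k * i' + 1) (engel y x' (p * k)) (engel y (x' ^ p) k) := by
  induction k with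
  | zero =>
      rw [Nat.mul_zero]
      exact MEq.refl y
  | succ k ih =>
      have e1 : p * (k+1) = p * k + p := by ring
      rw [e1, engel_add]
      set Z := engel y (x' ^ p) k with hZ
      have hxp : x' ^ p ∈ S.D (p * i') := S.pow i' x' hx
      have hZmem : Z ∈ S.D (j' + k * (p * i')) := S.engel_mem hy hxp k
      have step1 : S.MEq ((j' + p*k*i' + 1) + p * i')
          (engel (engel y x' (p*k)) x' p) (engel Z x' p) :=
        MEq.engel_fixed ih hx p
      have hbig2 : (p-2) * i' + 1 ≤ j' + k * (p * i') :=
        le_trans hbig (Nat.le_add_right _ _)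
      have step2 : S.MEq ((j' + k*(p*i')) + p * i' + 1) (engel Z x' p) ⁅Z, x' ^ p⁆ :=
        S.lazard hp hi' hx hZmem hbig2
      have goal1 : S.MEq (j' + p*(k+1)*i' + 1) (engel (engel y x' (p*k)) x' p) ⁅Z, x' ^ p⁆ := by
        refine MEq.trans (MEq.mono (le_of_eq (by ring)) step1) (MEq.mono (le_of_eq (by ring)) step2)
      rw [show engel y (x' ^ p) (k+1) = ⁅Z, x' ^ p⁆ from rfl]
      exact goal1

theorem bridge2 (hp : p.Prime) (s : ℕ) :
    ∀ {i' : ℕ}, 1 ≤ i' → ∀ {x' : G}, x' ∈ S.D i' → ∀ (N : ℕ) {j' : ℕ} {y : G}, y ∈ S.D j' →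
    (p-2) * p ^ s * i' + 1 ≤ j' →
    S.MEq (j' + p ^ s * N * i' + 1) (engel y x' (p ^ s * N)) (engel y (x' ^ (p ^ s)) N) := by
  induction s with
  | zero =>
      intro i' hi' x' hx N j' y hy hbig
      rw [pow_zero, Nat.one_mul, pow_one]
      exact MEq.refl _
  | succ s ih =>
      intro i' hi' x' hx N j' y hy hbig
      have hppos : 0 < p := hp.pos
      have e1 : p ^ (s+1) * N = p * (p ^ s * N) := by ring
      have hbig1 : (p-2) * i' + 1 ≤ j' := by
        refine le_trans ?_ hbig
        have h2 : (p-2) ≤ (p-2) * p ^ (s+1) :=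
          Nat.le_mul_of_pos_right _ (pow_pos hppos _)
        exact Nat.add_le_add_right (Nat.mul_le_mul_right i' h2) 1
      have h1 := S.bridge1 hp hi' hx (p ^ s * N) hy hbig1
      have hxp : x' ^ p ∈ S.D (p * i') := S.pow i' x' hx
      have hbig2 : (p-2) * p ^ s * (p * i') + 1 ≤ j' := by
        refine le_trans (le_of_eq ?_) hbig
        ring
      have h2 := ih (Nat.one_le_iff_ne_zero.mpr (by positivity)) hxp N hy hbig2
      have e2 : (x' ^ p) ^ (p ^ s) = x' ^ (p ^ (s+1)) := by
        rw [← pow_mul]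
        congr 1
        ring
      rw [e2] at h2
      rw [e1]
      refine MEq.trans (MEq.mono (le_of_eq (by ring)) h1) ?_
      refine MEq.mono (le_of_eq (by ring)) h2
  
end NpS

end Bridge

section Topology

open Finset

namespace NpS

variable {G : Type*} [Group G] [TopologicalSpace G] [IsTopologicalGroup G]
  [CompactSpace G] [T2Space G] [TotallyDisconnectedSpace G] {p : ℕ}

theorem uniform (S : NpS G p) {m : ℕ} (hm : 1 ≤ m) {a : G} (ha : a ∈ S.D m)
    (hE : ∀ g : G, ∃ n, engel g a n = 1) :
    ∃ N : ℕ, ∀ j : ℕ, 1 ≤ j → ∀ u : G, u ∈ S.D j →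
      engel u a N ∈ S.D (j + N * m + 1) := by
  have cont : ∀ n, Continuous (fun g : G => engel g a n) := by
    intro n
    induction n with
    | zero => exact continuous_id
    | succ k ih =>
        show Continuous (fun g : G => ⁅engel g a k, a⁆)
        simp only [commutatorElement_def]
        exact ((ih.mul continuous_const).mul ih.inv).mul continuous_const
  have Sclosed : ∀ n, IsClosed {g : G | engel g a n = 1} := by
    intro n
    have : {g : G | engel g a n = 1} = (fun g : G => engel g a n) ⁻¹' {1} := rfl
    rw [this]
    exact IsClosed.preimage (cont n) isClosed_singleton
  have hcover : (⋃ n : ℕ, {g : G | engel g a n = 1}) = Set.univ := by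
    ext g
    simp only [Set.mem_iUnion, Set.mem_univ, iff_true, Set.mem_setOf_eq]
    exact hE g
  obtain ⟨n₁, g₀, hg₀⟩ := nonempty_interior_of_iUnion_of_closed Sclosed hcover
  set V := interior {g : G | engel g a n₁ = 1} with hV
  have hVopen : IsOpen V := isOpen_interior
  have hVsub : V ⊆ {g : G | engel g a n₁ = 1} := interior_subset
  set V₁ : Set G := (fun h : G => g₀ * h) ⁻¹' V with hV₁
  have hV₁open : IsOpen V₁ := hVopen.preimage (continuous_mul_left g₀)
  have h1V₁ : (1 : G) ∈ V₁ := by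
    show g₀ * 1 ∈ V
    simpa using hg₀
  obtain ⟨C, hCclopen, h1C, hCsub⟩ := compact_exists_isClopen_in_isOpen hV₁open h1V₁
  obtain ⟨U, hU⟩ := IsTopologicalGroup.exist_openNormalSubgroup_sub_clopen_nhds_of_one hCclopen h1C
  set Us : Subgroup G := U.toOpenSubgroup.toSubgroup with hUs
  haveI : Us.Normal := U.isNormal'
  have hUsub : (Us : Set G) ⊆ V₁ := fun z hz => hCsub (hU hz)
  have key1 : ∀ u ∈ Us, engel (g₀ * u) a n₁ = 1 := by
    intro u hu
    exact hVsub (hUsub hu)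
  have key2 : engel g₀ a n₁ = 1 := by
    have := key1 1 (one_mem Us)
    simpa using this
  -- Engel values eventually enter U and stay
  have hstay : ∀ u ∈ Us, ⁅u, a⁆ ∈ Us := by
    intro u hu
    have h2 : a * u⁻¹ * a⁻¹ ∈ Us := Subgroup.Normal.conj_mem ‹Us.Normal› u⁻¹ (inv_mem hu) a
    have : ⁅u, a⁆ = u * (a * u⁻¹ * a⁻¹) := by group
    rw [this]
    exact mul_mem hu h2
  have hUmono : ∀ g : G, ∀ n n' : ℕ, n ≤ n' → engel g a n ∈ Us → engel g a n' ∈ Us := by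
    intro g n n' h hn
    induction n', h using Nat.le_induction with
    | base => exact hn
    | succ k hk ih => exact hstay _ ih
  set O : ℕ → Set G := fun n => {g : G | engel g a n ∈ Us} with hO
  have hOopen : ∀ n, IsOpen (O n) := fun n =>
    (U.toOpenSubgroup.isOpen).preimage (cont n)
  have hOcover : Set.univ ⊆ ⋃ n : ℕ, O n := by
    intro g _
    obtain ⟨n, hn⟩ := hE g
    refine Set.mem_iUnion.mpr ⟨n, ?_⟩
    show engel g a n ∈ Us
    rw [hn]
    exact one_mem Us
  obtain ⟨t, ht⟩ := isCompact_univ.elim_finite_subcover O hOopen hOcover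
  set L := t.sup id with hL
  have hLbound : ∀ g : G, engel g a L ∈ Us := by
    intro g
    obtain ⟨n, hnt, hgn⟩ := Set.mem_iUnion₂.mp (ht (Set.mem_univ g))
    exact hUmono g n L (Finset.le_sup (f := id) hnt) hgn
  refine ⟨L + n₁, ?_⟩
  intro j hj u hu
  set w := engel u a L with hw
  have hwU : w ∈ Us := hLbound u
  have hwD : w ∈ S.D (j + L * m) := S.engel_mem hu ha L
  have hlin := S.lin ha n₁ g₀ hwD
  have hz1 : engel (g₀ * w) a n₁ = 1 := key1 w hwU
  have hz2 : engel g₀ a n₁ = 1 := key2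
  rw [hz1, hz2] at hlin
  have hmem : engel w a n₁ ∈ S.D ((j + L * m) + n₁ * m + 1) := by
    have h3 : (engel w a n₁)⁻¹ ∈ S.D ((j + L * m) + n₁ * m + 1) := by
      have := hlin
      rw [NpS.MEq] at this
      simpa using this
    simpa using inv_mem h3
  have hfin : engel u a (L + n₁) = engel w a n₁ := by rw [engel_add]
  rw [hfin]
  exact S.mono' (le_of_eq (by ring)) hmem

end NpS

end Topology


/-- Let `G` be a profinite group with its `p`-dimension central series `D 1 ≥ D 2 ≥ ⋯`
(an `N_p`-series of closed subgroups) and let `x ∈ D i \ D (i+1)` be such that `x^d` is a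
left Engel element of `G` for some `d > 0`.  Then the corresponding homogeneous element `x*`
of the associated Lie algebra `L(G)` over `F_p` is ad-nilpotent: there is `n` with
`[y, ₙ x] ∈ D (j + n*i + 1)` for every homogeneous `y ∈ D j`. -/
theorem stmt8 {G : Type*} [Group G] [TopologicalSpace G] [IsTopologicalGroup G]
    [CompactSpace G] [T2Space G] [TotallyDisconnectedSpace G]
    {p : ℕ} (hp : p.Prime)
    (D : ℕ → Subgroup G) (hD1 : D 1 = ⊤)
    (hmono : ∀ i, D (i + 1) ≤ D i)
    (hclosed : ∀ i, IsClosed ((D i : Subgroup G) : Set G))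
    (hcomm : ∀ i j, ∀ x ∈ D i, ∀ y ∈ D j, ⁅x, y⁆ ∈ D (i + j))
    (hpow : ∀ i, ∀ x ∈ D i, x ^ p ∈ D (p * i))
    (i : ℕ) (hi : 1 ≤ i) (x : G) (hx : x ∈ D i) (hx' : x ∉ D (i + 1))
    (d : ℕ) (hd : 0 < d)
    (hEngel : ∀ g : G, ∃ n : ℕ, engel g (x ^ d) n = 1) :
    ∃ n : ℕ, 0 < n ∧ ∀ j, 1 ≤ j → ∀ y ∈ D j, engel y x n ∈ D (j + n * i + 1) := by
  set S : NpS G p := ⟨D, hD1, hmono, hcomm, hpow⟩ with hS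
  have hxS : x ∈ S.D i := hx
  set s := d.factorization p with hs
  set t := d / p ^ s with ht
  have hdec : p ^ s * t = d := Nat.ordProj_mul_ordCompl_eq_self d p
  have hpt : ¬ p ∣ t := Nat.not_dvd_ordCompl hp hd.ne'
  set m := p ^ s * i with hm
  have hm1 : 1 ≤ m := by
    have h1 : 0 < p ^ s := pow_pos hp.pos s
    exact Nat.one_le_iff_ne_zero.mpr (by positivity)
  set b := x ^ (p ^ s) with hb
  have hbD : b ∈ S.D m := S.pow_p_pow_mem hxS s
  have hba : b ^ t = x ^ d := by rw [← pow_mul, hdec]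
  have haD : x ^ d ∈ S.D m := by rw [← hba]; exact pow_mem hbD t
  obtain ⟨N, hN⟩ := S.uniform hm1 haD hEngel
  set B := (p-2) * p ^ s * i + 1 with hB
  have main : ∀ j' : ℕ, B ≤ j' → ∀ y : G, y ∈ S.D j' →
      engel y x (p ^ s * N) ∈ S.D (j' + (p ^ s * N) * i + 1) := by
    intro j' hBj y hy
    have hj'1 : 1 ≤ j' := le_trans (Nat.le_add_left 1 _) hBj
    have A1 : engel y (x ^ d) N ∈ S.D (j' + N * m + 1) := hN j' hj'1 y hy
    have A2 := S.engel_pow_right hj'1 hm1 hy hbD t N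
    rw [hba] at A2
    have A2' : (engel y b N) ^ (t ^ N) ∈ S.D (j' + N * m + 1) := NpS.MEq.mem_of A2 A1
    have hwD : engel y b N ∈ S.D (j' + N * m) := S.engel_mem hy hbD N
    have hptN : ¬ p ∣ t ^ N := fun hdvd => hpt (hp.dvd_of_dvd_pow hdvd)
    have A3 : engel y b N ∈ S.D ((j' + N * m) + 1) :=
      S.coprime_pow_mem (by omega) hp hwD hptN A2'
    have A4 := S.bridge2 hp s hi hxS N hy (by omega)
    have A3' : engel y b N ∈ S.D (j' + p ^ s * N * i + 1) := by
      refine S.mono' (le_of_eq (by rw [hm]; ring)) A3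
    have := NpS.MEq.mem_of (NpS.MEq.symm A4) A3'
    exact this
  refine ⟨B + p ^ s * N, by omega, ?_⟩
  intro j hj y hy
  set w := engel y x B with hw
  have hwD : w ∈ S.D (j + B * i) := S.engel_mem hy hxS B
  have hBle : B ≤ j + B * i := by
    have h1 : B * 1 ≤ B * i := Nat.mul_le_mul_left B hi
    omega
  have hmain := main (j + B * i) hBle w hwD
  have hfin : engel y x (B + p ^ s * N) = engel w x (p ^ s * N) := by rw [engel_add]
  rw [hfin]
  refine S.mono' (le_of_eq (by ring)) hmain
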